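/- Fix an integer L ≥ 2 and consider Cubic Code 3 on the torus (ZMod L)³. Every nontrivial logical operator of Code 3 has support of size at least L. -/

import Mathlib

namespace CubicCode3Torus

/-- Sites of the discrete torus `(ZMod L)³`. -/
abbrev Site (L : ℕ) := ZMod L × ZMod L × ZMod L

/-- A CSS Pauli operator (mod phase): a pair `(vX, vZ)` of functions `Site L → F₂ × F₂`
(two qubits per site). -/
abbrev Pauli (L : ℕ) := (Site L → ZMod 2 × ZMod 2) × (Site L → ZMod 2 × ZMod 2)

/-- The commutation pairing `⟨v,w⟩ = Σ_s (vX(s)·wZ(s) + vZ(s)·wX(s))`. -/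
def pairing (L : ℕ) [NeZero L] (v w : Pauli L) : ZMod 2 :=
  ∑ s : Site L,
    ((v.1 s).1 * (w.2 s).1 + (v.1 s).2 * (w.2 s).2 +
     (v.2 s).1 * (w.1 s).1 + (v.2 s).2 * (w.1 s).2)

/-- The Z-corner table of Cubic Code 3. -/
def z : Bool × Bool × Bool → ZMod 2 × ZMod 2
  | (false, false, false) => (0, 1)
  | (true,  false, false) => (1, 1)
  | (false, true,  false) => (1, 1)
  | (true,  true,  false) => (1, 0)
  | (false, false, true)  => (0, 1)
  | (true,  false, true)  => (0, 0)
  | (false, true,  true)  => (0, 1)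
  | (true,  true,  true)  => (1, 1)

/-- Embedding of a corner coordinate `{0,1}` into `ZMod L`. -/
def emb (L : ℕ) (b : Bool) : ZMod L := if b then 1 else 0

/-- The site `p + c` for a corner `c ∈ {0,1}³`. -/
def cellSite (L : ℕ) (p : Site L) (c : Bool × Bool × Bool) : Site L :=
  (p.1 + emb L c.1, p.2.1 + emb L c.2.1, p.2.2 + emb L c.2.2)

/-- `ζ_p`: the Z-part of the Z-type generator at `p`. -/
def zeta (L : ℕ) [NeZero L] (p : Site L) : Site L → ZMod 2 × ZMod 2 :=
  fun s => ∑ c : Bool × Bool × Bool, if s = cellSite L p c then z c else 0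

/-- `ξ_p`: the X-part of the X-type generator at `p`, `ξ_p(p+c) = σ(z((1,1,1)−c))`. -/
def xi (L : ℕ) [NeZero L] (p : Site L) : Site L → ZMod 2 × ZMod 2 :=
  fun s => ∑ c : Bool × Bool × Bool,
    if s = cellSite L p c then
      ((z (!c.1, !c.2.1, !c.2.2)).2, (z (!c.1, !c.2.1, !c.2.2)).1) else 0

/-- The Z-type generator `g_p = (0, ζ_p)`. -/
def gZ (L : ℕ) [NeZero L] (p : Site L) : Pauli L := (0, zeta L p)

/-- The X-type generator `f_p = (ξ_p, 0)`. -/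
def fX (L : ℕ) [NeZero L] (p : Site L) : Pauli L := (xi L p, 0)

/-- The stabilizer subspace: the `F₂`-span of all generators. -/
def stab (L : ℕ) [NeZero L] : Submodule (ZMod 2) (Pauli L) :=
  Submodule.span (ZMod 2) {v : Pauli L | ∃ p : Site L, v = gZ L p ∨ v = fX L p}

/-- The support of a Pauli operator. -/
def support (L : ℕ) (v : Pauli L) : Set (Site L) := {s | v.1 s ≠ 0 ∨ v.2 s ≠ 0}

end CubicCode3Torus

namespace CC3Aux
noncomputable section
set_option linter.unusedSectionVars false
open CubicCode3Torus
abbrev F2 := ZMod 2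
abbrev C3 := Bool × Bool × Bool
def negc (c : C3) : C3 := (!c.1, !c.2.1, !c.2.2)

variable (L : ℕ) [NeZero L]

abbrev T := AddMonoidAlgebra F2 (Site L)
abbrev P := MvPolynomial (Fin 3) F2

def kap (c : C3) : Site L := (emb L c.1, emb L c.2.1, emb L c.2.2)

def bn (b : Bool) : ℕ := bif b then 1 else 0

def nu (c : C3) : Fin 3 →₀ ℕ :=
  Finsupp.single 0 (bn c.1) + Finsupp.single 1 (bn c.2.1) + Finsupp.single 2 (bn c.2.2)

def rho : (Fin 3 →₀ ℕ) →+ (Site L) where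
  toFun m := ((m 0 : ZMod L), (m 1 : ZMod L), (m 2 : ZMod L))
  map_zero' := by simp
  map_add' m m' := by simp [Prod.ext_iff]

def pi : P →+* T L :=
  (AddMonoidAlgebra.mapDomainRingHom F2 (rho L) :
    AddMonoidAlgebra F2 (Fin 3 →₀ ℕ) →+* T L)

lemma pi_apply (p : P) : pi L p = AddMonoidAlgebra.mapDomain (rho L) p := rfl

def Ptab (τ : C3 → F2) : P := ∑ c : C3, MvPolynomial.monomial (nu c) (τ c)

def Ttab (τ : C3 → F2) : T L := ∑ c : C3, AddMonoidAlgebra.single (kap L c) (τ c)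

lemma rho_nu (c : C3) : rho L (nu c) = kap L c := by
  obtain ⟨b1, b2, b3⟩ := c
  simp only [rho, nu, AddMonoidHom.coe_mk, ZeroHom.coe_mk, kap]
  cases b1 <;> cases b2 <;> cases b3 <;>
    simp [Finsupp.single_apply, bn, emb]

lemma pi_Ptab (τ : C3 → F2) : pi L (Ptab τ) = Ttab L τ := by
  rw [Ptab, map_sum, Ttab]
  refine Finset.sum_congr rfl fun c _ => ?_
  rw [pi_apply, ← MvPolynomial.single_eq_monomial, AddMonoidAlgebra.mapDomain_single, rho_nu]

lemma kap_add_negc (c : C3) : kap L c + kap L (negc c) = ((1 : ZMod L), (1 : ZMod L), (1 : ZMod L)) := by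
  obtain ⟨b1, b2, b3⟩ := c
  cases b1 <;> cases b2 <;> cases b3 <;> simp [kap, negc, emb, Prod.ext_iff]

lemma negc_negc (c : C3) : negc (negc c) = c := by obtain ⟨b1, b2, b3⟩ := c; simp [negc]

def negcEquiv : C3 ≃ C3 := Function.Involutive.toPerm negc negc_negc

lemma mul_Ttab_apply (a : T L) (τ : C3 → F2) (t : Site L) :
    (a * Ttab L τ).coeff t = ∑ c : C3, a.coeff (t - kap L c) * τ c := by
  rw [Ttab, Finset.mul_sum, AddMonoidAlgebra.coeff_sum, Finsupp.finset_sum_apply]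
  exact Finset.sum_congr rfl fun c _ => by
    rw [AddMonoidAlgebra.coeff_mul_single_apply, sub_eq_add_neg]

lemma mul_Ttab_apply' (a : T L) (τ : C3 → F2) (p : Site L) :
    (a * Ttab L τ).coeff (p + ((1 : ZMod L), (1 : ZMod L), (1 : ZMod L)))
      = ∑ c : C3, a.coeff (p + kap L c) * τ (negc c) := by
  rw [mul_Ttab_apply]
  refine Fintype.sum_equiv negcEquiv _ _ fun c => ?_
  have h1 : p + ((1 : ZMod L), (1 : ZMod L), (1 : ZMod L)) - kap L c = p + kap L (negc c) := by
    rw [← kap_add_negc L c]; abel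
  have h2 : negcEquiv c = negc c := rfl
  rw [h2, h1, negc_negc]

def toT (u : Site L → F2) : T L := AddMonoidAlgebra.ofCoeff (Finsupp.equivFunOnFinite.symm u)

lemma toT_apply (u : Site L → F2) (s : Site L) : (toT L u).coeff s = u s := by
  simp [toT]

def tF : C3 → F2 := fun c => (z c).1
def tG : C3 → F2 := fun c => (z c).2
def tF' : C3 → F2 := fun c => (z (negc c)).2
def tG' : C3 → F2 := fun c => (z (negc c)).1

lemma cellSite_eq (p : Site L) (c : C3) : cellSite L p c = p + kap L c := rfl

lemma sum_collapse (f : Site L → F2) (g : C3 → F2) (p : Site L) :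
    (∑ s : Site L, f s * ∑ c : C3, (if s = cellSite L p c then g c else 0))
      = ∑ c : C3, f (p + kap L c) * g c := by
  simp_rw [Finset.mul_sum]
  rw [Finset.sum_comm]
  refine Finset.sum_congr rfl fun c _ => ?_
  simp_rw [mul_ite, mul_zero]
  rw [Finset.sum_ite_eq' Finset.univ (cellSite L p c) (fun s => f s * g c)]
  simp [cellSite_eq]

lemma xi_fst (p s : Site L) :
    (xi L p s).1 = ∑ c : C3, (if s = cellSite L p c then tF' c else 0) := by
  rw [xi, Prod.fst_sum]
  refine Finset.sum_congr rfl fun c _ => ?_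
  rw [apply_ite Prod.fst]
  rfl

lemma xi_snd (p s : Site L) :
    (xi L p s).2 = ∑ c : C3, (if s = cellSite L p c then tG' c else 0) := by
  rw [xi, Prod.snd_sum]
  refine Finset.sum_congr rfl fun c _ => ?_
  rw [apply_ite Prod.snd]
  rfl

lemma zeta_fst (p s : Site L) :
    (zeta L p s).1 = ∑ c : C3, (if s = cellSite L p c then tF c else 0) := by
  rw [zeta, Prod.fst_sum]
  refine Finset.sum_congr rfl fun c _ => ?_
  rw [apply_ite Prod.fst]
  rfl

lemma zeta_snd (p s : Site L) :
    (zeta L p s).2 = ∑ c : C3, (if s = cellSite L p c then tG c else 0) := by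
  rw [zeta, Prod.snd_sum]
  refine Finset.sum_congr rfl fun c _ => ?_
  rw [apply_ite Prod.snd]
  rfl

lemma pairing_fX (v : Pauli L) (p : Site L) :
    pairing L v (fX L p)
      = ∑ c : C3, ((v.2 (p + kap L c)).1 * tF' c + (v.2 (p + kap L c)).2 * tG' c) := by
  rw [pairing]
  simp only [fX, Pi.zero_apply, Prod.fst_zero, Prod.snd_zero, mul_zero, zero_add, add_zero]
  rw [Finset.sum_add_distrib]
  simp_rw [xi_fst, xi_snd]
  rw [sum_collapse, sum_collapse, ← Finset.sum_add_distrib]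

lemma pairing_gZ (v : Pauli L) (p : Site L) :
    pairing L v (gZ L p)
      = ∑ c : C3, ((v.1 (p + kap L c)).1 * tF c + (v.1 (p + kap L c)).2 * tG c) := by
  rw [pairing]
  simp only [gZ, Pi.zero_apply, Prod.fst_zero, Prod.snd_zero, mul_zero, zero_add, add_zero]
  rw [Finset.sum_add_distrib]
  simp_rw [zeta_fst, zeta_snd]
  rw [sum_collapse, sum_collapse, ← Finset.sum_add_distrib]

lemma hyp_f (v : Pauli L) (h : ∀ p, pairing L v (fX L p) = 0) :
    toT L (fun s => (v.2 s).1) * Ttab L tG + toT L (fun s => (v.2 s).2) * Ttab L tF = 0 := by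
  ext t
  have hp := h (t - ((1 : ZMod L), (1 : ZMod L), (1 : ZMod L)))
  rw [pairing_fX] at hp
  have key : t = (t - ((1 : ZMod L), (1 : ZMod L), (1 : ZMod L)))
      + ((1 : ZMod L), (1 : ZMod L), (1 : ZMod L)) := by abel
  rw [AddMonoidAlgebra.coeff_add, Finsupp.add_apply, AddMonoidAlgebra.coeff_zero,
    Finsupp.zero_apply, key, mul_Ttab_apply', mul_Ttab_apply',
    ← Finset.sum_add_distrib]
  simp_rw [toT_apply]
  rw [← hp]
  refine Finset.sum_congr rfl fun c _ => ?_
  simp [tF, tG, tF', tG', negc_negc]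

lemma hyp_g (v : Pauli L) (h : ∀ p, pairing L v (gZ L p) = 0) :
    toT L (fun s => (v.1 s).1) * Ttab L tG' + toT L (fun s => (v.1 s).2) * Ttab L tF' = 0 := by
  ext t
  have hp := h (t - ((1 : ZMod L), (1 : ZMod L), (1 : ZMod L)))
  rw [pairing_gZ] at hp
  have key : t = (t - ((1 : ZMod L), (1 : ZMod L), (1 : ZMod L)))
      + ((1 : ZMod L), (1 : ZMod L), (1 : ZMod L)) := by abel
  rw [AddMonoidAlgebra.coeff_add, Finsupp.add_apply, AddMonoidAlgebra.coeff_zero,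
    Finsupp.zero_apply, key, mul_Ttab_apply', mul_Ttab_apply',
    ← Finset.sum_add_distrib]
  simp_rw [toT_apply]
  rw [← hp]
  refine Finset.sum_congr rfl fun c _ => ?_
  simp [tF, tG, tF', tG', negc_negc]

lemma single_mul_Ttab_apply (p : Site L) (r : F2) (τ : C3 → F2) (s : Site L) :
    (AddMonoidAlgebra.single p r * Ttab L τ).coeff s
      = ∑ c : C3, (if s = p + kap L c then r * τ c else 0) := by
  rw [Ttab, Finset.mul_sum, AddMonoidAlgebra.coeff_sum, Finsupp.finset_sum_apply]
  refine Finset.sum_congr rfl fun c _ => ?_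
  rw [AddMonoidAlgebra.single_mul_single, AddMonoidAlgebra.coeff_single, Finsupp.single_apply]
  simp [eq_comm]

def thetaZ : T L →ₗ[F2] Pauli L where
  toFun h := (0, fun s => ((h * Ttab L tF).coeff s, (h * Ttab L tG).coeff s))
  map_add' a b := by
    refine Prod.ext (by simp) ?_
    funext s
    simp only [add_mul]
    rfl
  map_smul' r a := by
    refine Prod.ext (by simp) ?_
    funext s
    simp only [smul_mul_assoc, RingHom.id_apply]
    rfl

def thetaX : T L →ₗ[F2] Pauli L where
  toFun h := ((fun s => ((h * Ttab L tF').coeff s, (h * Ttab L tG').coeff s)), 0)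
  map_add' a b := by
    refine Prod.ext ?_ (by simp)
    funext s
    simp only [add_mul]
    rfl
  map_smul' r a := by
    refine Prod.ext ?_ (by simp)
    funext s
    simp only [smul_mul_assoc, RingHom.id_apply]
    rfl

lemma thetaZ_single (p : Site L) : thetaZ L (AddMonoidAlgebra.single p 1) = gZ L p := by
  refine Prod.ext (by simp [thetaZ, gZ]) ?_
  show _ = zeta L p
  funext s
  refine Prod.ext ?_ ?_
  · show ((AddMonoidAlgebra.single p (1 : F2) : T L) * Ttab L tF).coeff s = _
    rw [single_mul_Ttab_apply, zeta_fst]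
    exact Finset.sum_congr rfl fun c _ => by rw [cellSite_eq, one_mul]
  · show ((AddMonoidAlgebra.single p (1 : F2) : T L) * Ttab L tG).coeff s = _
    rw [single_mul_Ttab_apply, zeta_snd]
    exact Finset.sum_congr rfl fun c _ => by rw [cellSite_eq, one_mul]

lemma thetaX_single (p : Site L) : thetaX L (AddMonoidAlgebra.single p 1) = fX L p := by
  refine Prod.ext ?_ (by simp [thetaX, fX])
  show _ = xi L p
  funext s
  refine Prod.ext ?_ ?_
  · show ((AddMonoidAlgebra.single p (1 : F2) : T L) * Ttab L tF').coeff s = _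
    rw [single_mul_Ttab_apply, xi_fst]
    exact Finset.sum_congr rfl fun c _ => by rw [cellSite_eq, one_mul]
  · show ((AddMonoidAlgebra.single p (1 : F2) : T L) * Ttab L tG').coeff s = _
    rw [single_mul_Ttab_apply, xi_snd]
    exact Finset.sum_congr rfl fun c _ => by rw [cellSite_eq, one_mul]

lemma thetaZ_mem (h : T L) : thetaZ L h ∈ stab L := by
  have hs : h = Finsupp.sum h.coeff AddMonoidAlgebra.single :=
    (AddMonoidAlgebra.sum_coeff_single h).symm
  rw [hs, map_finsuppSum]
  refine Submodule.sum_mem _ fun p hp => ?_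
  show (thetaZ L) (AddMonoidAlgebra.single p (h.coeff p)) ∈ stab L
  have h1 : (AddMonoidAlgebra.single p (h.coeff p) : T L)
      = (h.coeff p) • (AddMonoidAlgebra.single p 1 : T L) := by
    rw [AddMonoidAlgebra.smul_single', mul_one]
  rw [h1, map_smul, thetaZ_single]
  exact Submodule.smul_mem _ _ (Submodule.subset_span ⟨p, Or.inl rfl⟩)

lemma thetaX_mem (h : T L) : thetaX L h ∈ stab L := by
  have hs : h = Finsupp.sum h.coeff AddMonoidAlgebra.single :=
    (AddMonoidAlgebra.sum_coeff_single h).symm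
  rw [hs, map_finsuppSum]
  refine Submodule.sum_mem _ fun p hp => ?_
  show (thetaX L) (AddMonoidAlgebra.single p (h.coeff p)) ∈ stab L
  have h1 : (AddMonoidAlgebra.single p (h.coeff p) : T L)
      = (h.coeff p) • (AddMonoidAlgebra.single p 1 : T L) := by
    rw [AddMonoidAlgebra.smul_single', mul_one]
  rw [h1, map_smul, thetaX_single]
  exact Submodule.smul_mem _ _ (Submodule.subset_span ⟨p, Or.inr rfl⟩)

def ell (s : Site L) : Fin 3 →₀ ℕ :=
  Finsupp.single 0 s.1.val + Finsupp.single 1 s.2.1.val + Finsupp.single 2 s.2.2.val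

lemma ell_apply_zero (s : Site L) : ell L s 0 = s.1.val := by
  simp [ell, Finsupp.single_apply]
lemma ell_apply_one (s : Site L) : ell L s 1 = s.2.1.val := by
  simp [ell, Finsupp.single_apply]
lemma ell_apply_two (s : Site L) : ell L s 2 = s.2.2.val := by
  simp [ell, Finsupp.single_apply]

lemma rho_ell (s : Site L) : rho L (ell L s) = s := by
  have h0 : ((ell L s 0 : ℕ) : ZMod L) = s.1 := by
    rw [ell_apply_zero]; exact ZMod.natCast_rightInverse s.1
  have h1 : ((ell L s 1 : ℕ) : ZMod L) = s.2.1 := by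
    rw [ell_apply_one]; exact ZMod.natCast_rightInverse s.2.1
  have h2 : ((ell L s 2 : ℕ) : ZMod L) = s.2.2 := by
    rw [ell_apply_two]; exact ZMod.natCast_rightInverse s.2.2
  show (((ell L s 0 : ℕ) : ZMod L), ((ell L s 1 : ℕ) : ZMod L), ((ell L s 2 : ℕ) : ZMod L)) = s
  rw [h0, h1, h2]

def lam (x : T L) : P := AddMonoidAlgebra.mapDomain (ell L) x

lemma pi_lam (x : T L) : pi L (lam L x) = x := by
  rw [pi_apply, lam]
  have : (rho L : (Fin 3 →₀ ℕ) → Site L) ∘ ell L = id := funext fun s => rho_ell L s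
  apply AddMonoidAlgebra.coeff_injective
  show Finsupp.mapDomain (rho L) (Finsupp.mapDomain (ell L) x.coeff) = x.coeff
  rw [← Finsupp.mapDomain_comp, this, Finsupp.mapDomain_id]

lemma cast_inj_of_bounds {x y : ℕ} (hx1 : 1 ≤ x) (hxL : x ≤ L) (hy1 : 1 ≤ y) (hyL : y ≤ L)
    (h : (x : ZMod L) = y) : x = y := by
  rw [ZMod.natCast_eq_natCast_iff'] at h
  rcases eq_or_lt_of_le hxL with hx | hx
  · rcases eq_or_lt_of_le hyL with hy | hy
    · omega
    · rw [hx, Nat.mod_self, Nat.mod_eq_of_lt hy] at h; omega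
  · rcases eq_or_lt_of_le hyL with hy | hy
    · rw [hy, Nat.mod_self, Nat.mod_eq_of_lt hx] at h; omega
    · rw [Nat.mod_eq_of_lt hx, Nat.mod_eq_of_lt hy] at h; exact h

lemma rho_injOn : Set.InjOn (rho L) {m : Fin 3 →₀ ℕ | ∀ i, 1 ≤ m i ∧ m i ≤ L} := by
  intro m hm m' hm' heq
  have h0 : ((m 0 : ℕ) : ZMod L) = ((m' 0 : ℕ) : ZMod L) := congrArg Prod.fst heq
  have h1 : ((m 1 : ℕ) : ZMod L) = ((m' 1 : ℕ) : ZMod L) :=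
    congrArg Prod.fst (congrArg Prod.snd heq)
  have h2 : ((m 2 : ℕ) : ZMod L) = ((m' 2 : ℕ) : ZMod L) :=
    congrArg Prod.snd (congrArg Prod.snd heq)
  ext i
  fin_cases i
  · exact cast_inj_of_bounds L (hm 0).1 (hm 0).2 (hm' 0).1 (hm' 0).2 h0
  · exact cast_inj_of_bounds L (hm 1).1 (hm 1).2 (hm' 1).1 (hm' 1).2 h1
  · exact cast_inj_of_bounds L (hm 2).1 (hm 2).2 (hm' 2).1 (hm' 2).2 h2

lemma nu_le (c : C3) (i : Fin 3) : nu c i ≤ 1 := by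
  obtain ⟨b1, b2, b3⟩ := c
  fin_cases i <;> cases b1 <;> cases b2 <;> cases b3 <;>
    simp [nu, bn, Finsupp.single_apply]

lemma Ptab_support_le (τ : C3 → F2) (m : Fin 3 →₀ ℕ) (hm : m ∈ (Ptab τ : P).support) :
    ∀ i, m i ≤ 1 := by
  rw [Ptab] at hm
  obtain ⟨c, -, hc⟩ := Finset.mem_biUnion.mp (MvPolynomial.support_sum hm)
  have := MvPolynomial.support_monomial_subset hc
  rw [Finset.mem_singleton] at this
  subst this
  exact nu_le c

lemma ell_bounds (s : Site L) (h1 : s.1 ≠ 0) (h2 : s.2.1 ≠ 0) (h3 : s.2.2 ≠ 0) (i : Fin 3) :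
    1 ≤ ell L s i ∧ ell L s i < L := by
  fin_cases i
  · show 1 ≤ ell L s 0 ∧ ell L s 0 < L
    rw [ell_apply_zero]
    exact ⟨Nat.one_le_iff_ne_zero.mpr fun h => h1 ((ZMod.val_eq_zero _).mp h), ZMod.val_lt _⟩
  · show 1 ≤ ell L s 1 ∧ ell L s 1 < L
    rw [ell_apply_one]
    exact ⟨Nat.one_le_iff_ne_zero.mpr fun h => h2 ((ZMod.val_eq_zero _).mp h), ZMod.val_lt _⟩
  · show 1 ≤ ell L s 2 ∧ ell L s 2 < L
    rw [ell_apply_two]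
    exact ⟨Nat.one_le_iff_ne_zero.mpr fun h => h3 ((ZMod.val_eq_zero _).mp h), ZMod.val_lt _⟩

lemma sector (Φ Ψ : P) (hΦ0 : Φ ≠ 0) (hcop : IsRelPrime Φ Ψ)
    (hΦs : ∀ m ∈ (Φ : AddMonoidAlgebra F2 (Fin 3 →₀ ℕ)).support, ∀ i, m i ≤ 1)
    (hΨs : ∀ m ∈ (Ψ : AddMonoidAlgebra F2 (Fin 3 →₀ ℕ)).support, ∀ i, m i ≤ 1)
    (a b : T L) (i j k : ZMod L)
    (ha : ∀ s : Site L, a.coeff s ≠ 0 → s.1 ≠ i ∧ s.2.1 ≠ j ∧ s.2.2 ≠ k)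
    (hb : ∀ s : Site L, b.coeff s ≠ 0 → s.1 ≠ i ∧ s.2.1 ≠ j ∧ s.2.2 ≠ k)
    (heq : a * pi L Ψ + b * pi L Φ = 0) :
    ∃ h : T L, a = h * pi L Φ ∧ b = h * pi L Ψ := by
  classical
  set u : Site L := (-i, -j, -k) with hu
  set a' := AddMonoidAlgebra.single u (1 : F2) * a with ha'
  set b' := AddMonoidAlgebra.single u (1 : F2) * b with hb'
  have hcoord : ∀ x : T L, (∀ s : Site L, x.coeff s ≠ 0 → s.1 ≠ i ∧ s.2.1 ≠ j ∧ s.2.2 ≠ k) →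
      ∀ s : Site L, (AddMonoidAlgebra.single u (1 : F2) * x).coeff s ≠ 0 →
        s.1 ≠ 0 ∧ s.2.1 ≠ 0 ∧ s.2.2 ≠ 0 := by
    intro x hx s hs
    rw [AddMonoidAlgebra.coeff_single_mul_apply, one_mul] at hs
    obtain ⟨e1, e2, e3⟩ := hx (-u + s) hs
    have hc1 : (-u + s).1 = i + s.1 := by simp [hu]
    have hc2 : (-u + s).2.1 = j + s.2.1 := by simp [hu]
    have hc3 : (-u + s).2.2 = k + s.2.2 := by simp [hu]
    rw [hc1] at e1; rw [hc2] at e2; rw [hc3] at e3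
    refine ⟨fun h => e1 (by rw [h, add_zero]), fun h => e2 (by rw [h, add_zero]),
      fun h => e3 (by rw [h, add_zero])⟩
  have hA := hcoord a ha
  have hB := hcoord b hb
  set S : Set (Fin 3 →₀ ℕ) := {m | ∀ i, 1 ≤ m i ∧ m i ≤ L} with hS
  set E : P := lam L a' * Ψ + lam L b' * Φ with hE
  have hmemsup : ∀ (x : T L), (∀ s : Site L, x.coeff s ≠ 0 → s.1 ≠ 0 ∧ s.2.1 ≠ 0 ∧ s.2.2 ≠ 0) →
      ∀ (Θ : P), (∀ m ∈ (Θ : AddMonoidAlgebra F2 (Fin 3 →₀ ℕ)).support, ∀ i, m i ≤ 1) →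
      ∀ m ∈ ((lam L x * Θ : P) : AddMonoidAlgebra F2 (Fin 3 →₀ ℕ)).support, m ∈ S := by
    intro x hx Θ hΘ m hm
    have hsub := AddMonoidAlgebra.support_coeff_mul_subset
      (lam L x : AddMonoidAlgebra F2 (Fin 3 →₀ ℕ)) (Θ : AddMonoidAlgebra F2 (Fin 3 →₀ ℕ)) hm
    rw [Finset.mem_add] at hsub
    obtain ⟨m1, hm1, m2, hm2, rfl⟩ := hsub
    have hm1' := Finsupp.mapDomain_support (f := ell L) (s := x.coeff) hm1
    rw [Finset.mem_image] at hm1'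
    obtain ⟨s, hs, rfl⟩ := hm1'
    rw [Finsupp.mem_support_iff] at hs
    obtain ⟨d1, d2, d3⟩ := hx s hs
    intro idx
    obtain ⟨hL1, hL2⟩ := ell_bounds L s d1 d2 d3 idx
    have := hΘ m2 hm2 idx
    constructor
    · have : (0:ℕ) ≤ m2 idx := Nat.zero_le _
      calc 1 ≤ ell L s idx := hL1
        _ ≤ ell L s idx + m2 idx := Nat.le_add_right _ _
        _ = (ell L s + m2) idx := rfl
    · show (ell L s + m2) idx ≤ L
      have : (ell L s + m2) idx = ell L s idx + m2 idx := rfl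
      omega
  have hpiE : pi L E = 0 := by
    rw [hE, map_add, map_mul, map_mul, pi_lam, pi_lam, ha', hb', mul_assoc, mul_assoc,
      ← mul_add, heq, mul_zero]
  have hEsup : ((E : AddMonoidAlgebra F2 (Fin 3 →₀ ℕ)).support : Set (Fin 3 →₀ ℕ)) ⊆ S := by
    intro m hm
    have hm' : m ∈ ((lam L a' * Ψ : P) : AddMonoidAlgebra F2 (Fin 3 →₀ ℕ)).support
        ∪ ((lam L b' * Φ : P) : AddMonoidAlgebra F2 (Fin 3 →₀ ℕ)).support := by
      exact Finsupp.support_add (by exact_mod_cast hm)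
    rcases Finset.mem_union.mp hm' with h | h
    · exact hmemsup a' hA Ψ hΨs m h
    · exact hmemsup b' hB Φ hΦs m h
  have hE0 : E = 0 := by
    have h0mem : (0 : (Fin 3 →₀ ℕ) →₀ F2) ∈
        {w : (Fin 3 →₀ ℕ) →₀ F2 | (w.support : Set (Fin 3 →₀ ℕ)) ⊆ S} := by
      simp
    have hEmem : (AddMonoidAlgebra.coeff E : (Fin 3 →₀ ℕ) →₀ F2) ∈
        {w : (Fin 3 →₀ ℕ) →₀ F2 | (w.support : Set (Fin 3 →₀ ℕ)) ⊆ S} := hEsup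
    refine AddMonoidAlgebra.coeff_eq_zero.mp
      (Finsupp.mapDomain_injOn S (rho_injOn L) hEmem h0mem ?_)
    rw [Finsupp.mapDomain_zero]; exact congrArg AddMonoidAlgebra.coeff hpiE
  have hmul : lam L a' * Ψ = lam L b' * Φ := by
    have h := eq_neg_of_add_eq_zero_left (hE ▸ hE0)
    rwa [CharTwo.neg_eq] at h
  have hdvd : Φ ∣ lam L a' := by
    refine hcop.dvd_of_dvd_mul_right ⟨lam L b', ?_⟩
    rw [hmul]; ring
  obtain ⟨h0, hh0⟩ := hdvd
  have hb0 : lam L b' = h0 * Ψ := by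
    have hcalc : Φ * (h0 * Ψ) = Φ * lam L b' := by
      calc Φ * (h0 * Ψ) = (Φ * h0) * Ψ := by ring
        _ = lam L a' * Ψ := by rw [← hh0]
        _ = lam L b' * Φ := hmul
        _ = Φ * lam L b' := by ring
    exact (mul_left_cancel₀ hΦ0 hcalc).symm
  have hA' : a' = pi L h0 * pi L Φ := by
    rw [← pi_lam L a', hh0, map_mul]; ring
  have hB' : b' = pi L h0 * pi L Ψ := by
    rw [← pi_lam L b', hb0, map_mul]
  have hinv : ∀ x : T L, AddMonoidAlgebra.single (-u) (1 : F2)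
      * (AddMonoidAlgebra.single u (1 : F2) * x) = x := by
    intro x
    rw [← mul_assoc, AddMonoidAlgebra.single_mul_single, one_mul, neg_add_cancel,
      ← AddMonoidAlgebra.one_def, one_mul]
  refine ⟨AddMonoidAlgebra.single (-u) (1 : F2) * pi L h0, ?_, ?_⟩
  · rw [← hinv a, ← ha', hA']; ring
  · rw [← hinv b, ← hb', hB']; ring

abbrev A2 := MvPolynomial (Fin 2) F2

lemma monomial_nu (c : C3) (a : F2) :
    MvPolynomial.monomial (nu c) a
      = MvPolynomial.C a * MvPolynomial.X 0 ^ bn c.1 * MvPolynomial.X 1 ^ bn c.2.1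
          * MvPolynomial.X 2 ^ bn c.2.2 := by
  rw [MvPolynomial.C_apply, MvPolynomial.X_pow_eq_monomial, MvPolynomial.X_pow_eq_monomial,
    MvPolynomial.X_pow_eq_monomial, MvPolynomial.monomial_mul, MvPolynomial.monomial_mul,
    MvPolynomial.monomial_mul, nu]
  simp

lemma fin_one_eq : (1 : Fin 3) = (0 : Fin 2).succ := rfl
lemma fin_two_eq : (2 : Fin 3) = (1 : Fin 2).succ := rfl

lemma fse_F : MvPolynomial.finSuccEquiv F2 2 (Ptab tF)
    = Polynomial.C (1 + MvPolynomial.X 0 + MvPolynomial.X 0 * MvPolynomial.X 1) * Polynomial.X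
      + Polynomial.C (MvPolynomial.X 0) := by
  rw [Ptab]
  simp only [Fintype.sum_prod_type, Fintype.sum_bool, monomial_nu, tF, z, bn, cond_true,
    cond_false, pow_zero, pow_one, map_add, map_mul, map_pow, MvPolynomial.finSuccEquiv_X_zero,
    fin_one_eq, fin_two_eq, MvPolynomial.finSuccEquiv_X_succ, MvPolynomial.C_0,
    MvPolynomial.C_1, map_zero, map_one]
  ring

lemma fse_G : MvPolynomial.finSuccEquiv F2 2 (Ptab tG)
    = Polynomial.C (1 + MvPolynomial.X 0 * MvPolynomial.X 1) * Polynomial.X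
      + Polynomial.C (1 + MvPolynomial.X 0 + MvPolynomial.X 1
          + MvPolynomial.X 0 * MvPolynomial.X 1) := by
  rw [Ptab]
  simp only [Fintype.sum_prod_type, Fintype.sum_bool, monomial_nu, tG, z, bn, cond_true,
    cond_false, pow_zero, pow_one, map_add, map_mul, map_pow, MvPolynomial.finSuccEquiv_X_zero,
    fin_one_eq, fin_two_eq, MvPolynomial.finSuccEquiv_X_succ, MvPolynomial.C_0,
    MvPolynomial.C_1, map_zero, map_one]
  ring

lemma fse_F' : MvPolynomial.finSuccEquiv F2 2 (Ptab tF')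
    = Polynomial.C (1 + MvPolynomial.X 0 + MvPolynomial.X 1
          + MvPolynomial.X 0 * MvPolynomial.X 1) * Polynomial.X
      + Polynomial.C (1 + MvPolynomial.X 0 * MvPolynomial.X 1) := by
  rw [Ptab]
  simp only [Fintype.sum_prod_type, Fintype.sum_bool, monomial_nu, tF', negc, z, bn, cond_true,
    cond_false, pow_zero, pow_one, map_add, map_mul, map_pow, MvPolynomial.finSuccEquiv_X_zero,
    fin_one_eq, fin_two_eq, MvPolynomial.finSuccEquiv_X_succ, MvPolynomial.C_0,
    MvPolynomial.C_1, map_zero, map_one, Bool.not_true, Bool.not_false]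
  ring

lemma fse_G' : MvPolynomial.finSuccEquiv F2 2 (Ptab tG')
    = Polynomial.C (MvPolynomial.X 1) * Polynomial.X
      + Polynomial.C (1 + MvPolynomial.X 1 + MvPolynomial.X 0 * MvPolynomial.X 1) := by
  rw [Ptab]
  simp only [Fintype.sum_prod_type, Fintype.sum_bool, monomial_nu, tG', negc, z, bn, cond_true,
    cond_false, pow_zero, pow_one, map_add, map_mul, map_pow, MvPolynomial.finSuccEquiv_X_zero,
    fin_one_eq, fin_two_eq, MvPolynomial.finSuccEquiv_X_succ, MvPolynomial.C_0,
    MvPolynomial.C_1, map_zero, map_one, Bool.not_true, Bool.not_false]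
  ring

lemma relPrime_lin {A : Type} [CommRing A] [IsDomain A] [UniqueFactorizationMonoid A]
    (α β γ δ : A) (hr : γ * β - α * δ ≠ 0)
    (hq : ∀ q : A, Prime q → q ∣ α → q ∣ β → q ∣ γ → q ∣ δ → False) :
    IsRelPrime (Polynomial.C α * Polynomial.X + Polynomial.C β)
      (Polynomial.C γ * Polynomial.X + Polynomial.C δ) := by
  intro kk hk1 hk2
  by_contra hku
  have hk0 : kk ≠ 0 := by
    rintro rfl
    rw [zero_dvd_iff] at hk1
    have hα : α = 0 := by
      have := congrArg (fun p => Polynomial.coeff p 1) hk1; simpa using this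
    have hβ : β = 0 := by
      have := congrArg (fun p => Polynomial.coeff p 0) hk1; simpa using this
    apply hr; rw [hα, hβ]; ring
  obtain ⟨p, hirr, hpk⟩ := WfDvdMonoid.exists_irreducible_factor hku hk0
  have hp : Prime p := UniqueFactorizationMonoid.irreducible_iff_prime.mp hirr
  have hp1 : p ∣ (Polynomial.C α * Polynomial.X + Polynomial.C β) := hpk.trans hk1
  have hp2 : p ∣ (Polynomial.C γ * Polynomial.X + Polynomial.C δ) := hpk.trans hk2
  have hdet : p ∣ Polynomial.C (γ * β - α * δ) := by
    have hid : Polynomial.C (γ * β - α * δ)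
        = Polynomial.C γ * (Polynomial.C α * Polynomial.X + Polynomial.C β)
          - Polynomial.C α * (Polynomial.C γ * Polynomial.X + Polynomial.C δ) := by
      rw [map_sub, map_mul, map_mul]; ring
    rw [hid]
    exact dvd_sub (Dvd.dvd.mul_left hp1 _) (Dvd.dvd.mul_left hp2 _)
  have hCr0 : Polynomial.C (γ * β - α * δ) ≠ 0 := fun h =>
    hr (by rwa [map_eq_zero_iff _ Polynomial.C_injective] at h)
  have hdeg : p.degree ≤ 0 :=
    le_trans (Polynomial.degree_le_of_dvd hdet hCr0) Polynomial.degree_C_le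
  have hpC : p = Polynomial.C (p.coeff 0) := Polynomial.eq_C_of_degree_le_zero hdeg
  have hqprime : Prime (p.coeff 0) := by rwa [hpC, Polynomial.prime_C_iff] at hp
  have hdvds : ∀ (x y : A), p ∣ (Polynomial.C x * Polynomial.X + Polynomial.C y) →
      p.coeff 0 ∣ x ∧ p.coeff 0 ∣ y := by
    intro x y hd
    rw [hpC, Polynomial.C_dvd_iff_dvd_coeff] at hd
    constructor
    · have := hd 1; simpa using this
    · have := hd 0; simpa using this
  obtain ⟨hα, hβ⟩ := hdvds α β hp1
  obtain ⟨hγ, hδ⟩ := hdvds γ δ hp2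
  exact hq (p.coeff 0) hqprime hα hβ hγ hδ

lemma transfer_isRelPrime (x y : P)
    (h : IsRelPrime (MvPolynomial.finSuccEquiv F2 2 x) (MvPolynomial.finSuccEquiv F2 2 y)) :
    IsRelPrime x y := by
  intro kk hk1 hk2
  have h1 : MvPolynomial.finSuccEquiv F2 2 kk ∣ MvPolynomial.finSuccEquiv F2 2 x :=
    map_dvd _ hk1
  have h2 : MvPolynomial.finSuccEquiv F2 2 kk ∣ MvPolynomial.finSuccEquiv F2 2 y :=
    map_dvd _ hk2
  have hu := h h1 h2
  have := hu.map (MvPolynomial.finSuccEquiv F2 2).symm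
  rwa [AlgEquiv.symm_apply_apply] at this

lemma isRelPrime_FG : IsRelPrime (Ptab tF) (Ptab tG) := by
  apply transfer_isRelPrime
  rw [fse_F, fse_G]
  apply relPrime_lin
  · intro h
    have h2 := congrArg (MvPolynomial.eval (fun _ : Fin 2 => (0 : F2))) h
    simp at h2
  · intro q hq hα hβ hγ hδ
    have h1 : q ∣ MvPolynomial.X 0 * MvPolynomial.X 1 := Dvd.dvd.mul_right hβ _
    have hone : q ∣ (1 : A2) := by
      have h2 := dvd_add hγ h1
      rwa [add_assoc, CharTwo.add_self_eq_zero, add_zero] at h2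
    exact hq.not_unit (isUnit_of_dvd_one hone)

lemma isRelPrime_FG' : IsRelPrime (Ptab tF') (Ptab tG') := by
  apply transfer_isRelPrime
  rw [fse_F', fse_G']
  apply relPrime_lin
  · intro h
    have h2 := congrArg (MvPolynomial.eval (fun _ : Fin 2 => (0 : F2))) h
    simp at h2
  · intro q hq hα hβ hγ hδ
    have h1 : q ∣ MvPolynomial.X 0 * MvPolynomial.X 1 := Dvd.dvd.mul_left hγ _
    have hone : q ∣ (1 : A2) := by
      have h2 := dvd_add hβ h1
      rwa [add_assoc, CharTwo.add_self_eq_zero, add_zero] at h2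
    exact hq.not_unit (isUnit_of_dvd_one hone)

lemma Ptab_tF_ne : (Ptab tF : P) ≠ 0 := by
  intro h
  have h2 := congrArg (MvPolynomial.finSuccEquiv F2 2) h
  rw [fse_F, map_zero] at h2
  have h3 := congrArg (fun p => Polynomial.coeff p 0) h2
  simp only [Polynomial.coeff_add, Polynomial.coeff_C_mul, Polynomial.coeff_X_zero,
    mul_zero, Polynomial.coeff_C, if_pos rfl, zero_add, Polynomial.coeff_zero] at h3
  exact MvPolynomial.X_ne_zero 0 h3

lemma Ptab_tF'_ne : (Ptab tF' : P) ≠ 0 := by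
  intro h
  have h2 := congrArg (MvPolynomial.finSuccEquiv F2 2) h
  rw [fse_F', map_zero] at h2
  have h3 := congrArg (fun p => Polynomial.coeff p 0) h2
  simp only [Polynomial.coeff_add, Polynomial.coeff_C_mul, Polynomial.coeff_X_zero,
    mul_zero, Polynomial.coeff_C, if_pos rfl, zero_add, Polynomial.coeff_zero] at h3
  have h4 := congrArg (MvPolynomial.eval (fun _ : Fin 2 => (0 : F2))) h3
  simp at h4


lemma exists_avoid (SS : Set (Site L)) (h : SS.ncard < L) (f : Site L → ZMod L) :
    ∃ i : ZMod L, ∀ s ∈ SS, f s ≠ i := by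
  by_contra hc
  push_neg at hc
  have himg : f '' SS = Set.univ := by
    ext i
    simp only [Set.mem_image, Set.mem_univ, iff_true]
    obtain ⟨s, hs, hfs⟩ := hc i
    exact ⟨s, hs, hfs⟩
  have h1 : (Set.univ : Set (ZMod L)).ncard ≤ SS.ncard := by
    rw [← himg]; exact Set.ncard_image_le (Set.toFinite SS)
  rw [Set.ncard_univ, Nat.card_eq_fintype_card, ZMod.card] at h1
  omega

end
end CC3Aux

open CC3Aux

open CubicCode3Torus

/-- Every nontrivial logical operator of Cubic Code 3 on the torus `(ZMod L)³`
has support of size at least `L`. -/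
theorem cubicCode3_distance_ge_L (L : ℕ) [NeZero L] (hL : 2 ≤ L)
    (v : Pauli L)
    (hlog : ∀ p : Site L, pairing L v (gZ L p) = 0 ∧ pairing L v (fX L p) = 0)
    (hnontriv : v ∉ stab L) :
    L ≤ (support L v).ncard := by
  by_contra hlt
  push_neg at hlt
  obtain ⟨i, hi⟩ := exists_avoid L _ hlt (fun s => s.1)
  obtain ⟨j, hj⟩ := exists_avoid L _ hlt (fun s => s.2.1)
  obtain ⟨k, hk⟩ := exists_avoid L _ hlt (fun s => s.2.2)
  have hmem1 : ∀ (f : Site L → F2), (∀ s, f s ≠ 0 → s ∈ support L v) →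
      ∀ s : Site L, (toT L f).coeff s ≠ 0 → s.1 ≠ i ∧ s.2.1 ≠ j ∧ s.2.2 ≠ k := by
    intro f hf s hs
    rw [toT_apply] at hs
    have hmm := hf s hs
    exact ⟨hi s hmm, hj s hmm, hk s hmm⟩
  have hs11 : ∀ s : Site L, (v.1 s).1 ≠ 0 → s ∈ support L v :=
    fun s hs => Or.inl fun h0 => hs (by rw [h0]; rfl)
  have hs12 : ∀ s : Site L, (v.1 s).2 ≠ 0 → s ∈ support L v :=
    fun s hs => Or.inl fun h0 => hs (by rw [h0]; rfl)
  have hs21 : ∀ s : Site L, (v.2 s).1 ≠ 0 → s ∈ support L v :=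
    fun s hs => Or.inr fun h0 => hs (by rw [h0]; rfl)
  have hs22 : ∀ s : Site L, (v.2 s).2 ≠ 0 → s ∈ support L v :=
    fun s hs => Or.inr fun h0 => hs (by rw [h0]; rfl)
  have heqX := hyp_g L v (fun p => (hlog p).1)
  have heqZ := hyp_f L v (fun p => (hlog p).2)
  rw [← pi_Ptab, ← pi_Ptab] at heqX heqZ
  obtain ⟨hX, haX, hbX⟩ := sector L (Ptab tF') (Ptab tG') Ptab_tF'_ne isRelPrime_FG'
    (Ptab_support_le tF') (Ptab_support_le tG')
    (toT L fun s => (v.1 s).1) (toT L fun s => (v.1 s).2) i j k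
    (hmem1 _ hs11) (hmem1 _ hs12) heqX
  obtain ⟨hZ, hcZ, hdZ⟩ := sector L (Ptab tF) (Ptab tG) Ptab_tF_ne isRelPrime_FG
    (Ptab_support_le tF) (Ptab_support_le tG)
    (toT L fun s => (v.2 s).1) (toT L fun s => (v.2 s).2) i j k
    (hmem1 _ hs21) (hmem1 _ hs22) heqZ
  rw [pi_Ptab] at haX hbX hcZ hdZ
  apply hnontriv
  have hv : v = thetaX L hX + thetaZ L hZ := by
    refine Prod.ext ?_ ?_
    · show v.1 = (thetaX L hX + thetaZ L hZ).1
      have hcomp : (thetaX L hX + thetaZ L hZ).1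
          = fun s => ((hX * Ttab L tF').coeff s, (hX * Ttab L tG').coeff s) := by
        show (fun s => ((hX * Ttab L tF').coeff s, (hX * Ttab L tG').coeff s)) + 0 = _
        rw [add_zero]
      rw [hcomp]
      funext s
      refine Prod.ext ?_ ?_
      · have h1 : (toT L fun s => (v.1 s).1).coeff s = (hX * Ttab L tF').coeff s := by rw [haX]
        rw [toT_apply] at h1
        exact h1
      · have h1 : (toT L fun s => (v.1 s).2).coeff s = (hX * Ttab L tG').coeff s := by rw [hbX]
        rw [toT_apply] at h1
        exact h1
    · show v.2 = (thetaX L hX + thetaZ L hZ).2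
      have hcomp : (thetaX L hX + thetaZ L hZ).2
          = fun s => ((hZ * Ttab L tF).coeff s, (hZ * Ttab L tG).coeff s) := by
        show 0 + (fun s => ((hZ * Ttab L tF).coeff s, (hZ * Ttab L tG).coeff s)) = _
        rw [zero_add]
      rw [hcomp]
      funext s
      refine Prod.ext ?_ ?_
      · have h1 : (toT L fun s => (v.2 s).1).coeff s = (hZ * Ttab L tF).coeff s := by rw [hcZ]
        rw [toT_apply] at h1
        exact h1
      · have h1 : (toT L fun s => (v.2 s).2).coeff s = (hZ * Ttab L tG).coeff s := by rw [hdZ]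
        rw [toT_apply] at h1
        exact h1
  rw [hv]
  exact add_mem (thetaX_mem L hX) (thetaZ_mem L hZ)
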